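/- (Regularity condition for the population loss) Let U, U★ ∈ ℂ^{D×r} and let R be a unitary r×r matrix attaining min_{R' unitary} ‖U − U★ R'‖_F. If the spectral norm satisfies ‖U − U★R‖ ≤ σ_r(U★)/4, then Re trace((U − U★R)^H·(U U^H − U★ U★^H)·U) ≥ (1/4)·‖U U^H − U★ U★^H‖_F² + (1/20)·‖(U − U★R)·U^H‖_F² + (σ_r(U★)²/4)·‖U − U★R‖_F². -/

import Mathlib

open Matrix
open scoped BigOperators ComplexOrder

/-- Frobenius norm of a complex matrix. -/
noncomputable def frobNorm {m n : ℕ} (A : Matrix (Fin m) (Fin n) ℂ) : ℝ :=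
  Real.sqrt (∑ i, ∑ j, ‖A i j‖ ^ 2)

/-- Spectral norm (largest singular value) of a complex matrix, as the operator
norm of the induced map between Euclidean spaces. -/
noncomputable def specNorm {m n : ℕ} (A : Matrix (Fin m) (Fin n) ℂ) : ℝ :=
  ‖LinearMap.toContinuousLinearMap (Matrix.toEuclideanLin A)‖

/-- The measurement map `𝒜(ρ)_k = trace (A k * ρ)` satisfies the `(s, δ)`-RIP. -/
def IsRIP {D K : ℕ} (A : Fin K → Matrix (Fin D) (Fin D) ℂ) (s : ℕ) (δ : ℝ) : Prop :=
  ∀ ρ : Matrix (Fin D) (Fin D) ℂ, ρ.rank ≤ s →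
    (1 - δ) * frobNorm ρ ^ 2 ≤ ((D : ℝ) / (K : ℝ)) * ∑ k, ‖Matrix.trace (A k * ρ)‖ ^ 2 ∧
      ((D : ℝ) / (K : ℝ)) * ∑ k, ‖Matrix.trace (A k * ρ)‖ ^ 2 ≤ (1 + δ) * frobNorm ρ ^ 2

/-- The adjoint of the measurement map: `𝒜*(e) = Σ_k e_k A_k`. -/
noncomputable def adjointMap {D K : ℕ} (A : Fin K → Matrix (Fin D) (Fin D) ℂ)
    (e : Fin K → ℝ) : Matrix (Fin D) (Fin D) ℂ :=
  ∑ k, (e k : ℂ) • A k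

/-- The Wirtinger gradient `G(U) = (D/K) Σ_k (trace(A_k U Uᴴ) − ŷ_k) A_k U`. -/
noncomputable def wGrad {D K r : ℕ} (A : Fin K → Matrix (Fin D) (Fin D) ℂ)
    (yhat : Fin K → ℝ) (U : Matrix (Fin D) (Fin r) ℂ) : Matrix (Fin D) (Fin r) ℂ :=
  ((D : ℂ) / (K : ℂ)) • ∑ k, (Matrix.trace (A k * (U * Uᴴ)) - (yhat k : ℂ)) • (A k * U)

/-- The Wirtinger Hessian quadratic form at `U` in direction `Δ`. -/
noncomputable def wHess {D K r : ℕ} (A : Fin K → Matrix (Fin D) (Fin D) ℂ)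
    (yhat : Fin K → ℝ) (U Δ : Matrix (Fin D) (Fin r) ℂ) : ℝ :=
  (2 * (D : ℝ) / (K : ℝ)) * ∑ k, (‖Matrix.trace (A k * (U * Δᴴ))‖ ^ 2
      + ((Matrix.trace (A k * (U * Δᴴ))) ^ 2).re)
    + (2 * (D : ℝ) / (K : ℝ)) *
      (Matrix.trace ((∑ k, (Matrix.trace (A k * (U * Uᴴ)) - (yhat k : ℂ)) • A k)
        * (Δ * Δᴴ))).re

/-- The function `h(δ)` from the recovery-error bound. -/
noncomputable def hfun (δ : ℝ) : ℝ :=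
  (Real.sqrt 2 + Real.sqrt (82.55 - 762.54 * δ - 843.09 * δ ^ 2)) / (1.5 - 15.7 * δ)

/-- The smallest singular value `σ_r(X)`: the square root of the smallest
eigenvalue of `Xᴴ X`. -/
noncomputable def sigmaMin {D r : ℕ} (X : Matrix (Fin D) (Fin r) ℂ) : ℝ :=
  Real.sqrt (⨅ i : Fin r, (Matrix.isHermitian_conjTranspose_mul_self X).eigenvalues i)

namespace StmtAux

open scoped Matrix.Norms.L2Operator

variable {m n p r : ℕ}

lemma specNorm_eq_norm (A : Matrix (Fin m) (Fin n) ℂ) : specNorm A = ‖A‖ := rfl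

lemma specNorm_nonneg (A : Matrix (Fin m) (Fin n) ℂ) : 0 ≤ specNorm A := by
  rw [specNorm_eq_norm]; exact norm_nonneg _

lemma specNorm_conjTranspose (A : Matrix (Fin m) (Fin n) ℂ) : specNorm Aᴴ = specNorm A := by
  rw [specNorm_eq_norm, specNorm_eq_norm]; exact Matrix.l2_opNorm_conjTranspose A

noncomputable def mvec (A : Matrix (Fin m) (Fin n) ℂ) : EuclideanSpace ℂ (Fin m × Fin n) :=
  (WithLp.equiv 2 _).symm (fun q => A q.1 q.2)

lemma mvec_norm (A : Matrix (Fin m) (Fin n) ℂ) : ‖mvec A‖ = frobNorm A := by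
  rw [EuclideanSpace.norm_eq, frobNorm]
  congr 1
  rw [Fintype.sum_prod_type]
  rfl

lemma mvec_inner (A B : Matrix (Fin m) (Fin n) ℂ) :
    (inner ℂ (mvec A) (mvec B) : ℂ) = Matrix.trace (Aᴴ * B) := by
  rw [PiLp.inner_apply, Matrix.trace]
  rw [Fintype.sum_prod_type]
  rw [Finset.sum_comm]
  simp [Matrix.diag, Matrix.mul_apply, Matrix.conjTranspose_apply, RCLike.inner_apply, mvec]
  exact Finset.sum_congr rfl (fun i _ => Finset.sum_congr rfl (fun j _ => mul_comm _ _))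

lemma frobNorm_nonneg (A : Matrix (Fin m) (Fin n) ℂ) : 0 ≤ frobNorm A := Real.sqrt_nonneg _

lemma frob_sq (A : Matrix (Fin m) (Fin n) ℂ) :
    frobNorm A ^ 2 = (Matrix.trace (Aᴴ * A)).re := by
  have h := inner_self_eq_norm_sq (𝕜 := ℂ) (mvec A)
  rw [← mvec_inner, ← mvec_norm, ← h]
  rfl

lemma frob_cs (A B : Matrix (Fin m) (Fin n) ℂ) :
    (Matrix.trace (Aᴴ * B)).re ≤ frobNorm A * frobNorm B := by
  rw [← mvec_inner, ← mvec_norm A, ← mvec_norm B]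
  exact re_inner_le_norm (𝕜 := ℂ) _ _

lemma frob_cs_abs (A B : Matrix (Fin m) (Fin n) ℂ) :
    |(Matrix.trace (Aᴴ * B)).re| ≤ frobNorm A * frobNorm B := by
  rw [abs_le]
  constructor
  · have h := frob_cs A (-B)
    rw [Matrix.mul_neg, Matrix.trace_neg, Complex.neg_re] at h
    have : frobNorm (-B) = frobNorm B := by
      rw [frobNorm, frobNorm]; simp
    rw [this] at h
    linarith
  · exact frob_cs A B

lemma frob_conjTranspose (A : Matrix (Fin m) (Fin n) ℂ) : frobNorm Aᴴ = frobNorm A := by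
  rw [frobNorm, frobNorm, Finset.sum_comm]
  simp [Matrix.conjTranspose_apply]

lemma mvec_add (A B : Matrix (Fin m) (Fin n) ℂ) : mvec (A + B) = mvec A + mvec B := rfl

lemma frob_add_sq (A B : Matrix (Fin m) (Fin n) ℂ) :
    frobNorm (A + B) ^ 2
      = frobNorm A ^ 2 + 2 * (Matrix.trace (Aᴴ * B)).re + frobNorm B ^ 2 := by
  rw [← mvec_norm, ← mvec_norm, ← mvec_norm, ← mvec_inner, mvec_add]
  exact norm_add_sq (𝕜 := ℂ) _ _

lemma frob_triangle (A B : Matrix (Fin m) (Fin n) ℂ) :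
    frobNorm (A + B) ≤ frobNorm A + frobNorm B := by
  rw [← mvec_norm, ← mvec_norm, ← mvec_norm, mvec_add]
  exact norm_add_le _ _

lemma euclidean_norm_sq (y : EuclideanSpace ℂ (Fin m)) :
    ‖y‖ ^ 2 = ∑ i, ‖y i‖ ^ 2 := by
  rw [EuclideanSpace.norm_eq, Real.sq_sqrt (by positivity)]

lemma frob_sq_sum (A : Matrix (Fin m) (Fin n) ℂ) :
    frobNorm A ^ 2 = ∑ i, ∑ j, ‖A i j‖ ^ 2 := by
  rw [frobNorm, Real.sq_sqrt (by positivity)]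

lemma frob_mul_le_spec_frob (A : Matrix (Fin m) (Fin n) ℂ) (B : Matrix (Fin n) (Fin p) ℂ) :
    frobNorm (A * B) ≤ specNorm A * frobNorm B := by
  have h1 : 0 ≤ specNorm A * frobNorm B :=
    mul_nonneg (norm_nonneg _) (frobNorm_nonneg _)
  rw [← Real.sqrt_sq h1, frobNorm]
  apply Real.sqrt_le_sqrt
  have hcol : ∀ j : Fin p, ∑ i, ‖(A * B) i j‖ ^ 2 ≤ (specNorm A)^2 * ∑ i, ‖B i j‖^2 := by
    intro j
    set vB : EuclideanSpace ℂ (Fin n) := (WithLp.equiv 2 (Fin n → ℂ)).symm (fun i => B i j) with hvB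
    have hv := Matrix.l2_opNorm_mulVec A vB
    have h2 : ‖(EuclideanSpace.equiv (Fin m) ℂ).symm (A *ᵥ vB)‖^2 ≤ (‖A‖*‖vB‖)^2 :=
      pow_le_pow_left₀ (norm_nonneg _) hv 2
    rw [euclidean_norm_sq] at h2
    have hL : ∀ i, ‖((EuclideanSpace.equiv (Fin m) ℂ).symm (A *ᵥ vB)) i‖^2 = ‖(A*B) i j‖^2 := by
      intro i
      have : ((EuclideanSpace.equiv (Fin m) ℂ).symm (A *ᵥ vB)) i = (A * B) i j := by
        show (A *ᵥ (fun i => B i j)) i = (A * B) i j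
        simp [Matrix.mulVec, Matrix.mul_apply, dotProduct]
      rw [this]
    rw [Finset.sum_congr rfl (fun i _ => hL i)] at h2
    have hvBn : ‖vB‖^2 = ∑ i, ‖B i j‖^2 := by
      rw [euclidean_norm_sq]; rfl
    calc ∑ i, ‖(A * B) i j‖ ^ 2 ≤ (‖A‖*‖vB‖)^2 := h2
      _ = (specNorm A)^2 * ∑ i, ‖B i j‖^2 := by rw [mul_pow, hvBn]; rfl
  calc ∑ i, ∑ j, ‖(A*B) i j‖^2 = ∑ j, ∑ i, ‖(A*B) i j‖^2 := Finset.sum_comm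
    _ ≤ ∑ j, (specNorm A)^2 * ∑ i, ‖B i j‖^2 := Finset.sum_le_sum (fun j _ => hcol j)
    _ = (specNorm A)^2 * ∑ j, ∑ i, ‖B i j‖^2 := by rw [Finset.mul_sum]
    _ = (specNorm A * frobNorm B)^2 := by
        rw [mul_pow, frobNorm, Real.sq_sqrt (by positivity), Finset.sum_comm]

lemma re_trace_symm (A B : Matrix (Fin m) (Fin n) ℂ) :
    (Matrix.trace (Aᴴ * B)).re = (Matrix.trace (Bᴴ * A)).re := by
  have h : Matrix.trace (Bᴴ * A) = star (Matrix.trace (Aᴴ * B)) := by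
    rw [← Matrix.trace_conjTranspose, Matrix.conjTranspose_mul,
      Matrix.conjTranspose_conjTranspose]
  rw [h]
  rfl

lemma frob_sub_sq (A B : Matrix (Fin m) (Fin n) ℂ) :
    frobNorm (A - B) ^ 2
      = frobNorm A ^ 2 - 2 * (Matrix.trace (Bᴴ * A)).re + frobNorm B ^ 2 := by
  have h := frob_add_sq A (-B)
  rw [show A + -B = A - B from by abel] at h
  rw [Matrix.mul_neg, Matrix.trace_neg, Complex.neg_re] at h
  have hBB : frobNorm (-B) = frobNorm B := by rw [frobNorm, frobNorm]; simp
  rw [hBB] at h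
  rw [h, re_trace_symm]
  ring

lemma star_mul_self_c (z : ℂ) : star z * z = ((‖z‖ ^ 2 : ℝ) : ℂ) := by
  have h1 : star z * z = z * (starRingEnd ℂ) z := by
    rw [Complex.star_def, mul_comm]
  rw [h1, Complex.mul_conj]
  congr 1
  rw [Complex.normSq_eq_norm_sq]

lemma dot_self_re (v : Fin m → ℂ) : (star v ⬝ᵥ v).re = ∑ i, ‖v i‖ ^ 2 := by
  rw [dotProduct, Complex.re_sum]
  apply Finset.sum_congr rfl
  intro i _
  have : star v i * v i = ((‖v i‖ ^ 2 : ℝ) : ℂ) := star_mul_self_c (v i)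
  rw [this, Complex.ofReal_re]

lemma dot_conj (w u : Fin r → ℂ) : star w ⬝ᵥ u = starRingEnd ℂ (star u ⬝ᵥ w) := by
  rw [dotProduct, dotProduct, map_sum]
  apply Finset.sum_congr rfl
  intro i _
  simp [Pi.star_apply, Complex.star_def, mul_comm]

lemma dot_conjTranspose_mulVec (A : Matrix (Fin r) (Fin r) ℂ) (v : Fin r → ℂ) :
    star v ⬝ᵥ (Aᴴ *ᵥ v) = starRingEnd ℂ (star v ⬝ᵥ (A *ᵥ v)) := by
  rw [Matrix.dotProduct_mulVec, ← Matrix.star_mulVec, dot_conj]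

lemma sigmaMin_sq {D : ℕ} [NeZero r] (X : Matrix (Fin D) (Fin r) ℂ) :
    sigmaMin X ^ 2 = ⨅ i : Fin r, (Matrix.isHermitian_conjTranspose_mul_self X).eigenvalues i := by
  rw [sigmaMin, Real.sq_sqrt]
  exact le_ciInf (fun i => Matrix.eigenvalues_conjTranspose_mul_self_nonneg X i)

lemma sigmaMin_nonneg {D : ℕ} (X : Matrix (Fin D) (Fin r) ℂ) : 0 ≤ sigmaMin X :=
  Real.sqrt_nonneg _

lemma sigmaMin_mulVec {D : ℕ} [NeZero r] (X : Matrix (Fin D) (Fin r) ℂ) (y : Fin r → ℂ) :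
    sigmaMin X ^ 2 * ∑ i, ‖y i‖ ^ 2 ≤ ∑ i, ‖(X *ᵥ y) i‖ ^ 2 := by
  classical
  set hH := Matrix.isHermitian_conjTranspose_mul_self X with hHdef
  set W : Matrix (Fin r) (Fin r) ℂ := (hH.eigenvectorUnitary : Matrix (Fin r) (Fin r) ℂ) with hW
  set z : Fin r → ℂ := star W *ᵥ y with hz
  have hWW : W * star W = 1 := Matrix.mem_unitaryGroup_iff.mp (hH.eigenvectorUnitary).2
  have hstarz : star z = star y ᵥ* W := by
    rw [hz, Matrix.star_mulVec, Matrix.star_eq_conjTranspose, Matrix.conjTranspose_conjTranspose]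
  have key1 : ∑ i, ‖(X *ᵥ y) i‖ ^ 2 = (star y ⬝ᵥ ((Xᴴ * X) *ᵥ y)).re := by
    rw [← dot_self_re, Matrix.star_mulVec, ← Matrix.dotProduct_mulVec, Matrix.mulVec_mulVec]
  have key2 : star y ⬝ᵥ ((Xᴴ * X) *ᵥ y)
      = ∑ i, (hH.eigenvalues i : ℂ) * (star z i * z i) := by
    conv_lhs => rw [hH.spectral_theorem, Unitary.conjStarAlgAut_apply]
    rw [← Matrix.mulVec_mulVec, ← Matrix.mulVec_mulVec, ← hz,
      Matrix.dotProduct_mulVec, ← hstarz, dotProduct]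
    apply Finset.sum_congr rfl
    intro i _
    rw [Matrix.mulVec_diagonal]
    show star z i * ((hH.eigenvalues i : ℂ) * z i) = _
    ring
  have hzy : ∑ i, ‖z i‖ ^ 2 = ∑ i, ‖y i‖ ^ 2 := by
    rw [← dot_self_re, ← dot_self_re (v := y), hstarz, ← Matrix.dotProduct_mulVec,
      Matrix.mulVec_mulVec, hWW, Matrix.one_mulVec]
  have key3 : (star y ⬝ᵥ ((Xᴴ * X) *ᵥ y)).re = ∑ i, hH.eigenvalues i * ‖z i‖ ^ 2 := by
    rw [key2, Complex.re_sum]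
    apply Finset.sum_congr rfl
    intro i _
    have : (star z i * z i) = ((‖z i‖^2 : ℝ) : ℂ) := star_mul_self_c (z i)
    rw [this, ← Complex.ofReal_mul, Complex.ofReal_re]
  rw [key1, key3, ← hzy, sigmaMin_sq, Finset.mul_sum]
  apply Finset.sum_le_sum
  intro i _
  have h1 : (⨅ j : Fin r, hH.eigenvalues j) ≤ hH.eigenvalues i :=
    ciInf_le (Set.Finite.bddBelow (Set.finite_range _)) i
  have h2 : (0:ℝ) ≤ ‖z i‖ ^ 2 := by positivity
  exact mul_le_mul_of_nonneg_right h1 h2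

lemma expand_gen (P : Matrix (Fin r) (Fin r) ℂ) (hPP : P * P = P) (a b : ℂ) :
    (1 - a • P) * (1 - b • P) = 1 - a • P - b • P + (a * b) • P := by
  simp only [sub_mul, mul_sub, one_mul, mul_one, smul_mul_assoc, mul_smul_comm, smul_smul, hPP]
  module

lemma proj_idem (v : Fin r → ℂ) (hv : star v ⬝ᵥ v = 1) :
    Matrix.vecMulVec v (star v) * Matrix.vecMulVec v (star v) = Matrix.vecMulVec v (star v) := by
  ext i j
  rw [Matrix.mul_apply]
  have h : ∀ k, Matrix.vecMulVec v (star v) i k * Matrix.vecMulVec v (star v) k j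
      = (v i * star v j) * (star v k * v k) := by
    intro k; simp only [Matrix.vecMulVec_apply]; ring
  rw [Finset.sum_congr rfl (fun k _ => h k), ← Finset.mul_sum,
    show (∑ k, star v k * v k) = star v ⬝ᵥ v from rfl, hv, mul_one]
  simp [Matrix.vecMulVec_apply]

lemma proj_herm (v : Fin r → ℂ) :
    (Matrix.vecMulVec v (star v))ᴴ = Matrix.vecMulVec v (star v) := by
  ext i j
  simp only [Matrix.conjTranspose_apply, Matrix.vecMulVec_apply, Pi.star_apply, star_mul']
  simp [mul_comm]

lemma householder_unitary (v : Fin r → ℂ) (hv : star v ⬝ᵥ v = 1) (c : ℂ) (hc : star c * c = 1) :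
    (1 - (1 - c) • Matrix.vecMulVec v (star v))ᴴ * (1 - (1 - c) • Matrix.vecMulVec v (star v))
      = 1 := by
  have hPP := proj_idem v hv
  have hPH := proj_herm v
  have hc' : starRingEnd ℂ c * c = 1 := by rw [← Complex.star_def]; exact hc
  have hWH : (1 - (1 - c) • Matrix.vecMulVec v (star v))ᴴ
      = 1 - (1 - starRingEnd ℂ c) • Matrix.vecMulVec v (star v) := by
    rw [Matrix.conjTranspose_sub, Matrix.conjTranspose_smul, Matrix.conjTranspose_one, hPH,
      star_sub, star_one, Complex.star_def]
  rw [hWH, expand_gen _ hPP]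
  have hab : (1 - starRingEnd ℂ c) * (1 - c) = (1 - starRingEnd ℂ c) + (1 - c) := by
    linear_combination hc'
  rw [hab, add_smul]
  abel

lemma hermitian_of_max (M : Matrix (Fin r) (Fin r) ℂ)
    (key : ∀ W : Matrix (Fin r) (Fin r) ℂ, Wᴴ * W = 1 →
      (Matrix.trace (Wᴴ * M)).re ≤ (Matrix.trace M).re) :
    Mᴴ = M := by
  have step1 : ∀ v : Fin r → ℂ, star v ⬝ᵥ v = 1 → (star v ⬝ᵥ (M *ᵥ v)).im = 0 := by
    intro v hv
    set q : ℂ := star v ⬝ᵥ (M *ᵥ v) with hq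
    by_cases hq0 : q = 0
    · rw [hq0]; rfl
    set c : ℂ := q / ‖q‖ with hcdef
    have hqn : (‖q‖ : ℂ) ≠ 0 := by
      simp only [ne_eq, Complex.ofReal_eq_zero, norm_eq_zero]; exact hq0
    have hqq : starRingEnd ℂ q * q = ((‖q‖ ^ 2 : ℝ) : ℂ) := by
      rw [← Complex.star_def]; exact star_mul_self_c q
    have hcq : starRingEnd ℂ c * q = (‖q‖ : ℂ) := by
      rw [hcdef, map_div₀, Complex.conj_ofReal, div_mul_eq_mul_div, hqq, div_eq_iff hqn]
      push_cast
      ring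
    have hcu : star c * c = 1 := by
      rw [Complex.star_def, hcdef, map_div₀, Complex.conj_ofReal, div_mul_div_comm, hqq,
        div_eq_one_iff_eq (mul_ne_zero hqn hqn)]
      push_cast
      ring
    have hW := householder_unitary v hv c hcu
    set P : Matrix (Fin r) (Fin r) ℂ := Matrix.vecMulVec v (star v) with hP
    have htrP : Matrix.trace (P * M) = q := by
      rw [Matrix.trace]
      have hdiag : ∀ i, Matrix.diag (P * M) i = ∑ k, (v i * star v k) * M k i := by
        intro i; rw [Matrix.diag]
        rw [Matrix.mul_apply]
        exact Finset.sum_congr rfl (fun k _ => by rw [hP, Matrix.vecMulVec_apply])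
      rw [Finset.sum_congr rfl (fun i _ => hdiag i), Finset.sum_comm, hq, dotProduct]
      apply Finset.sum_congr rfl
      intro k _
      rw [Matrix.mulVec, dotProduct, Finset.mul_sum]
      apply Finset.sum_congr rfl
      intro i _
      ring
    have hWH : (1 - (1 - c) • P)ᴴ = 1 - (1 - starRingEnd ℂ c) • P := by
      rw [Matrix.conjTranspose_sub, Matrix.conjTranspose_smul, Matrix.conjTranspose_one,
        hP, proj_herm, star_sub, star_one, Complex.star_def]
    have hkey := key _ hW
    rw [hWH, Matrix.sub_mul, Matrix.one_mul, smul_mul_assoc, Matrix.trace_sub,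
      Matrix.trace_smul, htrP] at hkey
    have hsm : ((1 - starRingEnd ℂ c) • q) = q - starRingEnd ℂ c * q := by
      rw [smul_eq_mul]; ring
    rw [hsm, hcq, Complex.sub_re, Complex.sub_re] at hkey
    have habs : ‖q‖ ≤ q.re := by
      have h2 : ((‖q‖ : ℂ)).re = ‖q‖ := Complex.ofReal_re _
      linarith
    have hle : q.re ≤ ‖q‖ := by
      exact Complex.re_le_norm q
    have heq : Complex.normSq q = q.re ^ 2 := by
      rw [← Complex.sq_norm, le_antisymm hle habs]
    have him : q.im ^ 2 = 0 := by
      rw [Complex.normSq_apply] at heq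
      nlinarith
    exact pow_eq_zero_iff (n := 2) (by norm_num) |>.mp him
  have step2 : ∀ v : Fin r → ℂ, (star v ⬝ᵥ (M *ᵥ v)).im = 0 := by
    intro v
    by_cases hv0 : v = 0
    · subst hv0; simp
    have hs : (0:ℝ) < ∑ i, ‖v i‖ ^ 2 := by
      have hex : ∃ i, v i ≠ 0 := by
        by_contra h
        push_neg at h
        exact hv0 (funext h)
      obtain ⟨i, hi⟩ := hex
      have h1 : (0:ℝ) < ‖v i‖ ^ 2 := pow_pos (norm_pos_iff.mpr hi) 2
      have hle : ‖v i‖ ^ 2 ≤ ∑ j, ‖v j‖ ^ 2 :=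
        Finset.single_le_sum (f := fun j => ‖v j‖^2) (fun j _ => by positivity)
          (Finset.mem_univ i)
      linarith
    set s : ℝ := Real.sqrt (∑ i, ‖v i‖ ^ 2) with hsdef
    have hs0 : 0 < s := Real.sqrt_pos.mpr hs
    have hss : s ^ 2 = ∑ i, ‖v i‖ ^ 2 := Real.sq_sqrt hs.le
    set u : Fin r → ℂ := ((s⁻¹ : ℝ) : ℂ) • v with hu
    have hdot : star v ⬝ᵥ v = ((∑ i, ‖v i‖^2 : ℝ) : ℂ) := by
      rw [dotProduct,
        show ((∑ i, ‖v i‖^2 : ℝ):ℂ) = ∑ i, ((‖v i‖^2:ℝ):ℂ) from by push_cast; ring]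
      exact Finset.sum_congr rfl (fun i _ => star_mul_self_c (v i))
    have huu : star u ⬝ᵥ u = 1 := by
      rw [hu, star_smul, smul_dotProduct, dotProduct_smul, hdot, ← hss]
      rw [smul_eq_mul, smul_eq_mul, Complex.star_def, Complex.conj_ofReal]
      push_cast
      field_simp
    have hqu : star u ⬝ᵥ (M *ᵥ u) = (((s⁻¹ : ℝ)^2 : ℝ) : ℂ) * (star v ⬝ᵥ (M *ᵥ v)) := by
      rw [hu, star_smul, smul_dotProduct, Matrix.mulVec_smul, dotProduct_smul,
        Complex.star_def, Complex.conj_ofReal, smul_eq_mul, smul_eq_mul]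
      push_cast
      ring
    have h1 := step1 u huu
    rw [hqu] at h1
    have h2 : ((((s⁻¹:ℝ)^2 : ℝ) : ℂ) * (star v ⬝ᵥ (M *ᵥ v))).im
        = ((s⁻¹:ℝ)^2) * (star v ⬝ᵥ (M *ᵥ v)).im := by
      rw [Complex.mul_im, Complex.ofReal_re, Complex.ofReal_im]; ring
    rw [h2] at h1
    have hs2 : ((s⁻¹:ℝ)^2) ≠ 0 := pow_ne_zero 2 (inv_ne_zero hs0.ne')
    exact (mul_eq_zero.mp h1).resolve_left hs2
  have hzero : ∀ v : Fin r → ℂ, star v ⬝ᵥ ((M - Mᴴ) *ᵥ v) = 0 := by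
    intro v
    rw [Matrix.sub_mulVec, dotProduct_sub, dot_conjTranspose_mulVec]
    have him := step2 v
    rw [sub_eq_zero]
    exact (Complex.conj_eq_iff_im.mpr him).symm
  have hT : ∀ x : EuclideanSpace ℂ (Fin r),
      (inner ℂ ((Matrix.toEuclideanLin (M - Mᴴ)) x) x : ℂ) = 0 := by
    intro x
    rw [PiLp.inner_apply]
    have hterm : ∀ i, (inner ℂ ((Matrix.toEuclideanLin (M - Mᴴ) x) i) (x i) : ℂ)
        = star (((M - Mᴴ) *ᵥ (fun j => x j)) i) * x i := by
      intro i
      rw [RCLike.inner_apply, mul_comm]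
      rfl
    rw [Finset.sum_congr rfl (fun i _ => hterm i)]
    rw [show (∑ i, star (((M - Mᴴ) *ᵥ (fun j => x j)) i) * x i)
        = star ((M - Mᴴ) *ᵥ (fun j => x j)) ⬝ᵥ (fun j => x j) from rfl]
    rw [dot_conj, hzero, map_zero]
  have h0 : Matrix.toEuclideanLin (M - Mᴴ) = 0 := (inner_map_self_eq_zero _).mp hT
  have hsub : M - Mᴴ = 0 := by
    apply Matrix.toEuclideanLin.injective
    rw [h0, map_zero]
  exact (sub_eq_zero.mp hsub).symm

end StmtAux

set_option maxHeartbeats 2000000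

open StmtAux

/-- Regularity condition for the population loss. -/
theorem stmt_17 {D r : ℕ} (U Ustar : Matrix (Fin D) (Fin r) ℂ)
    (R : Matrix (Fin r) (Fin r) ℂ)
    (hRunit : Rᴴ * R = 1)
    (hRmin : ∀ R' : Matrix (Fin r) (Fin r) ℂ, R'ᴴ * R' = 1 →
      frobNorm (U - Ustar * R) ≤ frobNorm (U - Ustar * R'))
    (hclose : specNorm (U - Ustar * R) ≤ sigmaMin Ustar / 4) :
    1 / 4 * frobNorm (U * Uᴴ - Ustar * Ustarᴴ) ^ 2
        + 1 / 20 * frobNorm ((U - Ustar * R) * Uᴴ) ^ 2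
        + sigmaMin Ustar ^ 2 / 4 * frobNorm (U - Ustar * R) ^ 2
      ≤ (Matrix.trace ((U - Ustar * R)ᴴ * ((U * Uᴴ - Ustar * Ustarᴴ) * U))).re := by
  classical
  rcases Nat.eq_zero_or_pos r with hr | hr
  · subst hr
    have h0 : ∀ (A : Matrix (Fin D) (Fin 0) ℂ) (B : Matrix (Fin 0) (Fin D) ℂ), A * B = 0 := by
      intro A B; ext i j; simp [Matrix.mul_apply]
    have hE0 : U * Uᴴ - Ustar * Ustarᴴ = 0 := by rw [h0, h0]; simp
    have hDU0 : (U - Ustar * R) * Uᴴ = 0 := h0 _ _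
    have hfrob0 : ∀ (A : Matrix (Fin D) (Fin D) ℂ), A = 0 → frobNorm A = 0 := by
      intro A hA; subst hA; simp [frobNorm]
    have hb0 : frobNorm (U - Ustar * R) = 0 := by
      simp [frobNorm]
    have htr : Matrix.trace ((U - Ustar * R)ᴴ * ((U * Uᴴ - Ustar * Ustarᴴ) * U)) = 0 := by
      rw [Matrix.trace]
      simp
    rw [hfrob0 _ hE0, hfrob0 _ hDU0, hb0, htr]
    norm_num
  haveI : NeZero r := ⟨hr.ne'⟩
  set σ : ℝ := sigmaMin Ustar with hσdef
  set V : Matrix (Fin D) (Fin r) ℂ := Ustar * R with hVdef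
  set E : Matrix (Fin D) (Fin D) ℂ := U * Uᴴ - Ustar * Ustarᴴ with hEdef
  set Δ : Matrix (Fin D) (Fin r) ℂ := U - V with hΔdef
  clear_value σ E Δ V
  have hRR : R * Rᴴ = 1 := mul_eq_one_comm.mp hRunit
  have hVV : V * Vᴴ = Ustar * Ustarᴴ := by
    rw [hVdef, Matrix.conjTranspose_mul,
      show Ustar * R * (Rᴴ * Ustarᴴ) = Ustar * ((R * Rᴴ) * Ustarᴴ) from by
        simp only [Matrix.mul_assoc],
      hRR, Matrix.one_mul]
  have hU : U = V + Δ := by rw [hΔdef]; abel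
  have hV2 : V = U - Δ := by rw [hΔdef]; abel
  have hE : E = Δ * Uᴴ + V * Δᴴ := by
    rw [hEdef, ← hVV, hΔdef, Matrix.conjTranspose_sub, Matrix.sub_mul, Matrix.mul_sub]
    abel
  have hEH : Eᴴ = E := by
    rw [hEdef, ← hVV, Matrix.conjTranspose_sub, Matrix.conjTranspose_mul,
      Matrix.conjTranspose_mul, Matrix.conjTranspose_conjTranspose,
      Matrix.conjTranspose_conjTranspose]
  -- the optimal-rotation property makes `Vᴴ * U` Hermitian
  set M : Matrix (Fin r) (Fin r) ℂ := Vᴴ * U with hMdef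
  clear_value M
  have keyW : ∀ W : Matrix (Fin r) (Fin r) ℂ, Wᴴ * W = 1 →
      (Matrix.trace (Wᴴ * M)).re ≤ (Matrix.trace M).re := by
    intro W hW
    have hWWH : W * Wᴴ = 1 := mul_eq_one_comm.mp hW
    have hRW : (R * W)ᴴ * (R * W) = 1 := by
      rw [Matrix.conjTranspose_mul,
        show Wᴴ * Rᴴ * (R * W) = Wᴴ * ((Rᴴ * R) * W) from by simp only [Matrix.mul_assoc],
        hRunit, Matrix.one_mul, hW]
    have hle := hRmin (R * W) hRW
    have hfr : U - Ustar * (R * W) = U - V * W := by rw [hVdef, Matrix.mul_assoc]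
    rw [hfr] at hle
    have hsq := pow_le_pow_left₀ (frobNorm_nonneg _) hle 2
    rw [hΔdef] at hsq
    rw [frob_sub_sq, frob_sub_sq] at hsq
    have hfVW : frobNorm (V * W) ^ 2 = frobNorm V ^ 2 := by
      rw [frob_sq, frob_sq, Matrix.conjTranspose_mul,
        show Wᴴ * Vᴴ * (V * W) = Wᴴ * (Vᴴ * V) * W from by simp only [Matrix.mul_assoc],
        Matrix.trace_mul_cycle, ← Matrix.mul_assoc, hWWH, Matrix.one_mul]
    have htrVW : (Matrix.trace ((V * W)ᴴ * U)).re = (Matrix.trace (Wᴴ * M)).re := by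
      rw [Matrix.conjTranspose_mul, Matrix.mul_assoc, hMdef]
    rw [hfVW, htrVW] at hsq
    have hMM : (Matrix.trace (Vᴴ * U)).re = (Matrix.trace M).re := by rw [hMdef]
    rw [hMM] at hsq
    linarith
  have hM : Mᴴ = M := hermitian_of_max M keyW
  have hUV : Uᴴ * V = Vᴴ * U := by
    have h := hM
    rw [hMdef] at h
    simp only [Matrix.conjTranspose_mul, Matrix.conjTranspose_conjTranspose] at h
    exact h
  set N : Matrix (Fin r) (Fin r) ℂ := Uᴴ * Δ with hNdef
  clear_value N
  have e1 : N = Uᴴ * U - Uᴴ * V := by rw [hNdef, hΔdef, Matrix.mul_sub]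
  have hN : Nᴴ = N := by
    have e2 : Nᴴ = Uᴴ * U - Vᴴ * U := by
      rw [e1]
      simp only [Matrix.conjTranspose_sub, Matrix.conjTranspose_mul,
        Matrix.conjTranspose_conjTranspose]
    rw [e2, e1, hUV]
  have hΔU : Δᴴ * U = N := by
    rw [← hN, hNdef]
    simp only [Matrix.conjTranspose_mul, Matrix.conjTranspose_conjTranspose]
  -- real quantities
  set aa : ℝ := frobNorm E with haadef
  set bb : ℝ := frobNorm Δ with hbbdef
  set tt : ℝ := frobNorm (Δ * Uᴴ) with httdef
  set vv : ℝ := frobNorm (V * Δᴴ) with hvvdef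
  set nnn : ℝ := frobNorm N with hnnndef
  set ww : ℝ := frobNorm (Δ * Δᴴ) with hwwdef
  set τ : ℝ := (Matrix.trace (N * (Δᴴ * Δ))).re with hτdef
  clear_value aa bb tt vv nnn ww τ
  have hE2 : E = Δ * Uᴴ + U * Δᴴ - Δ * Δᴴ := by
    rw [hE, hV2, Matrix.sub_mul]
    abel
  have hterm1 : Matrix.trace ((Δ * Uᴴ) * (Δ * Δᴴ)) = Matrix.trace (N * (Δᴴ * Δ)) := by
    calc Matrix.trace ((Δ * Uᴴ) * (Δ * Δᴴ))
        = Matrix.trace (Δ * (Uᴴ * (Δ * Δᴴ))) := by rw [Matrix.mul_assoc]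
      _ = Matrix.trace ((Uᴴ * (Δ * Δᴴ)) * Δ) := Matrix.trace_mul_comm _ _
      _ = Matrix.trace (N * (Δᴴ * Δ)) := by rw [hNdef]; simp only [Matrix.mul_assoc]
  have hterm2 : Matrix.trace ((U * Δᴴ) * (Δ * Δᴴ)) = Matrix.trace (N * (Δᴴ * Δ)) := by
    calc Matrix.trace ((U * Δᴴ) * (Δ * Δᴴ))
        = Matrix.trace (U * (Δᴴ * (Δ * Δᴴ))) := by rw [Matrix.mul_assoc]
      _ = Matrix.trace ((Δᴴ * (Δ * Δᴴ)) * U) := Matrix.trace_mul_comm _ _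
      _ = Matrix.trace ((Δᴴ * Δ) * (Δᴴ * U)) := by simp only [Matrix.mul_assoc]
      _ = Matrix.trace ((Δᴴ * Δ) * N) := by rw [hΔU]
      _ = Matrix.trace (N * (Δᴴ * Δ)) := Matrix.trace_mul_comm _ _
  have hDDH : (Δ * Δᴴ)ᴴ = Δ * Δᴴ := by
    rw [Matrix.conjTranspose_mul, Matrix.conjTranspose_conjTranspose]
  have hterm3 : (Matrix.trace ((Δ * Δᴴ) * (Δ * Δᴴ))).re = ww ^ 2 := by
    rw [hwwdef, frob_sq, hDDH]
  have hEE : (Matrix.trace (E * E)).re = aa ^ 2 := by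
    rw [haadef, frob_sq, hEH]
  -- key identity for the right-hand side
  have hRHS : (Matrix.trace (Δᴴ * (E * U))).re = 1/2 * aa^2 + τ - 1/2 * ww^2 := by
    have hA : Matrix.trace (Δᴴ * (E * U)) = Matrix.trace (E * (U * Δᴴ)) := by
      rw [Matrix.trace_mul_comm, Matrix.mul_assoc]
    have hB : (Matrix.trace (E * (Δ * Uᴴ))).re = (Matrix.trace (E * (U * Δᴴ))).re := by
      have h1 : E * (Δ * Uᴴ) = ((U * Δᴴ) * E)ᴴ := by
        rw [Matrix.conjTranspose_mul, Matrix.conjTranspose_mul, hEH,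
          Matrix.conjTranspose_conjTranspose]
      rw [h1, Matrix.trace_conjTranspose, Matrix.trace_mul_comm]
      rfl
    have hD : U * Δᴴ + Δ * Uᴴ = E + Δ * Δᴴ := by
      have hsum : V * Δᴴ + Δ * Δᴴ = U * Δᴴ := by rw [← Matrix.add_mul, ← hU]
      rw [hE, add_assoc, hsum]
      abel
    have h2 : Matrix.trace (E * (U * Δᴴ)) + Matrix.trace (E * (Δ * Uᴴ))
        = Matrix.trace (E * E) + Matrix.trace (E * (Δ * Δᴴ)) := by
      rw [← Matrix.trace_add, ← Matrix.trace_add, ← Matrix.mul_add, ← Matrix.mul_add, hD]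
    have h3 := congrArg Complex.re h2
    rw [Complex.add_re, Complex.add_re] at h3
    have hEDD : (Matrix.trace (E * (Δ * Δᴴ))).re = 2 * τ - ww ^ 2 := by
      rw [hE2, Matrix.sub_mul, Matrix.add_mul, Matrix.trace_sub, Matrix.trace_add,
        Complex.sub_re, Complex.add_re, hterm1, hterm2, hterm3, hτdef]
      ring
    rw [hA]
    rw [hEDD, hEE] at h3
    linarith [hB]
  -- expansion of the Frobenius norm of E
  have hasq : aa ^ 2 = tt ^ 2 + vv ^ 2 + 2 * nnn ^ 2 - 2 * τ := by
    have h1 : aa ^ 2 = frobNorm (Δ * Uᴴ + V * Δᴴ) ^ 2 := by rw [haadef, hE]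
    rw [h1, frob_add_sq]
    have hcross : (Matrix.trace ((Δ * Uᴴ)ᴴ * (V * Δᴴ))).re = nnn ^ 2 - τ := by
      have e2 : Matrix.trace ((Δ * Uᴴ)ᴴ * (V * Δᴴ))
          = Matrix.trace ((Δᴴ * V) * (Δᴴ * U)) := by
        rw [Matrix.conjTranspose_mul, Matrix.conjTranspose_conjTranspose,
          show U * Δᴴ * (V * Δᴴ) = U * (Δᴴ * (V * Δᴴ)) from by simp only [Matrix.mul_assoc],
          Matrix.trace_mul_comm]
        simp only [Matrix.mul_assoc]
      have e3 : Δᴴ * V = N - Δᴴ * Δ := by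
        rw [hV2, Matrix.mul_sub, hΔU]
      rw [e2, e3, hΔU, Matrix.sub_mul, Matrix.trace_sub, Complex.sub_re]
      have e5 : (Matrix.trace (N * N)).re = nnn ^ 2 := by
        rw [hnnndef, frob_sq, hN]
      have e6 : (Matrix.trace ((Δᴴ * Δ) * N)).re = τ := by
        rw [Matrix.trace_mul_comm, hτdef]
      rw [e5, e6]
    rw [hcross, httdef, hvvdef]
    ring
  -- triangle inequality lower bound for tt
  have hfrobneg : ∀ (A : Matrix (Fin D) (Fin D) ℂ), frobNorm (-A) = frobNorm A := by
    intro A; rw [frobNorm, frobNorm]; simp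
  have ht_lb : vv - ww ≤ tt := by
    have hsplit : Δ * Vᴴ = Δ * Uᴴ + -(Δ * Δᴴ) := by
      rw [hV2, Matrix.conjTranspose_sub, Matrix.mul_sub]
      abel
    have h1 : frobNorm (Δ * Vᴴ) = vv := by
      rw [show Δ * Vᴴ = (V * Δᴴ)ᴴ from by
        rw [Matrix.conjTranspose_mul, Matrix.conjTranspose_conjTranspose], frob_conjTranspose,
        hvvdef]
    have h2 := frob_triangle (Δ * Uᴴ) (-(Δ * Δᴴ))
    rw [← hsplit, h1, hfrobneg, ← httdef, ← hwwdef] at h2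
    linarith
  -- lower bound for vv via the smallest singular value
  have hv_lb : σ ^ 2 * bb ^ 2 ≤ vv ^ 2 := by
    have hb' : bb ^ 2 = ∑ j, ∑ k, ‖Δᴴ k j‖ ^ 2 := by
      rw [hbbdef, ← frob_conjTranspose Δ, frob_sq_sum, Finset.sum_comm]
    rw [hvvdef, frob_sq_sum, Finset.sum_comm, hb', Finset.mul_sum]
    apply Finset.sum_le_sum
    intro j _
    have hcol : ∀ i, (V * Δᴴ) i j = (Ustar *ᵥ (R *ᵥ (fun k => Δᴴ k j))) i := by
      intro i
      rw [Matrix.mulVec_mulVec, hVdef]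
      simp [Matrix.mul_apply, Matrix.mulVec, dotProduct]
    have hRy : ∑ k, ‖(R *ᵥ (fun k => Δᴴ k j)) k‖ ^ 2 = ∑ k, ‖Δᴴ k j‖ ^ 2 := by
      rw [← dot_self_re, ← dot_self_re, Matrix.star_mulVec, ← Matrix.dotProduct_mulVec,
        Matrix.mulVec_mulVec, hRunit, Matrix.one_mulVec]
    calc σ ^ 2 * ∑ k, ‖Δᴴ k j‖ ^ 2
        = σ ^ 2 * ∑ k, ‖(R *ᵥ (fun k => Δᴴ k j)) k‖ ^ 2 := by rw [hRy]
      _ ≤ ∑ i, ‖(Ustar *ᵥ (R *ᵥ (fun k => Δᴴ k j))) i‖ ^ 2 := by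
          rw [hσdef]; exact sigmaMin_mulVec Ustar _
      _ = ∑ i, ‖(V * Δᴴ) i j‖ ^ 2 :=
          Finset.sum_congr rfl (fun i _ => by rw [hcol i])
  -- spectral norm bounds
  have hspec0 : 0 ≤ specNorm Δ := specNorm_nonneg Δ
  have hb0 : 0 ≤ bb := by rw [hbbdef]; exact frobNorm_nonneg _
  have ht0 : 0 ≤ tt := by rw [httdef]; exact frobNorm_nonneg _
  have hv0 : 0 ≤ vv := by rw [hvvdef]; exact frobNorm_nonneg _
  have hn0 : 0 ≤ nnn := by rw [hnnndef]; exact frobNorm_nonneg _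
  have hw0 : 0 ≤ ww := by rw [hwwdef]; exact frobNorm_nonneg _
  have hσ0 : 0 ≤ σ := by rw [hσdef]; exact sigmaMin_nonneg _
  have hw_ub : ww ≤ σ / 4 * bb := by
    rw [hwwdef, hbbdef]
    have h1 := frob_mul_le_spec_frob Δ Δᴴ
    rw [frob_conjTranspose] at h1
    calc frobNorm (Δ * Δᴴ) ≤ specNorm Δ * frobNorm Δ := h1
      _ ≤ σ / 4 * frobNorm Δ := mul_le_mul_of_nonneg_right hclose (frobNorm_nonneg _)
  have hfq_ub : frobNorm (Δᴴ * Δ) ≤ σ / 4 * bb := by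
    rw [hbbdef]
    have h1 := frob_mul_le_spec_frob Δᴴ Δ
    rw [specNorm_conjTranspose] at h1
    calc frobNorm (Δᴴ * Δ) ≤ specNorm Δ * frobNorm Δ := h1
      _ ≤ σ / 4 * frobNorm Δ := mul_le_mul_of_nonneg_right hclose (frobNorm_nonneg _)
  have hτ_abs : |τ| ≤ nnn * frobNorm (Δᴴ * Δ) := by
    have h1 : τ = (Matrix.trace (Nᴴ * (Δᴴ * Δ))).re := by rw [hN, hτdef]
    rw [h1, hnnndef]
    exact frob_cs_abs N (Δᴴ * Δ)
  have hτ_lb : -(nnn * (σ / 4 * bb)) ≤ τ := by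
    have h1 : nnn * frobNorm (Δᴴ * Δ) ≤ nnn * (σ / 4 * bb) :=
      mul_le_mul_of_nonneg_left hfq_ub hn0
    have h2 := (abs_le.mp hτ_abs).1
    linarith
  have hσb_le_v : σ * bb ≤ vv := by
    have h1 : (σ * bb) ^ 2 ≤ vv ^ 2 := by rw [mul_pow]; exact hv_lb
    have h2 : σ * bb = Real.sqrt ((σ * bb) ^ 2) := (Real.sqrt_sq (mul_nonneg hσ0 hb0)).symm
    have h3 : vv = Real.sqrt (vv ^ 2) := (Real.sqrt_sq hv0).symm
    rw [h2, h3]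
    exact Real.sqrt_le_sqrt h1
  have ht34 : 3 / 4 * (σ * bb) ≤ tt := by linarith
  have ht2 : (3 / 4 * (σ * bb)) ^ 2 ≤ tt ^ 2 :=
    pow_le_pow_left₀ (mul_nonneg (by norm_num) (mul_nonneg hσ0 hb0)) ht34 2
  have hw2 : ww ^ 2 ≤ (σ / 4 * bb) ^ 2 :=
    pow_le_pow_left₀ hw0 hw_ub 2
  have hτ_lb' : -(1/4*(σ*bb*nnn)) ≤ τ := by
    have e : nnn * (σ / 4 * bb) = 1/4*(σ*bb*nnn) := by ring
    linarith [hτ_lb, e]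
  have ht2' : 9/16*(σ*bb)^2 ≤ tt^2 := by
    have e : (3 / 4 * (σ * bb)) ^ 2 = 9/16*(σ*bb)^2 := by ring
    linarith [ht2, e]
  have hv_lb' : (σ*bb)^2 ≤ vv^2 := by
    have e : (σ*bb)^2 = σ^2*bb^2 := by ring
    linarith [hv_lb, e]
  have hw2' : ww^2 ≤ 1/16*(σ*bb)^2 := by
    have e : (σ / 4 * bb) ^ 2 = 1/16*(σ*bb)^2 := by ring
    linarith [hw2, e]
  have hq : 0 ≤ 1/2*nnn^2 - 1/8*(σ*bb*nnn) + 1/128*(σ*bb)^2 := by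
    have e : (nnn - σ*bb/8)^2 = nnn^2 - 1/4*(σ*bb*nnn) + 1/64*(σ*bb)^2 := by ring
    have h := sq_nonneg (nnn - σ*bb/8)
    linarith [h, e]
  have heq1 : σ^2/4*bb^2 = 1/4*(σ*bb)^2 := by ring
  have hs2 : 0 ≤ (σ*bb)^2 := sq_nonneg _
  rw [hRHS]
  linarith [hasq, hτ_lb', ht2', hv_lb', hw2', hq, heq1, hs2]
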